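/- One-step tangent contraction for noisy tensor power iteration: let v₁ be the top eigenvector of T = Σ_i λ_i v_i^{⊗3} with orthonormal v_i and λ₁ > λ₂ ≥ ... ≥ λ_k > 0. Set Δ = (λ₁−λ₂)/4 and let u ∈ ℝⁿ be a unit vector with tan θ(v₁, u) < 1. Let ε̃ ∈ ℝⁿ be a noise vector with 4‖ε̃‖ ≤ ε(λ₁−λ₂) and 4|⟨v₁, ε̃⟩| ≤ (λ₁−λ₂)cos²θ(v₁,u), for some ε < 1. Then tan θ(v₁, T(I,u,u) + ε̃) ≤ max(ε, ((λ₂+Δε)/(λ₂+2Δ)) tan θ(v₁,u)). -/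

import Mathlib

set_option maxHeartbeats 1000000


open scoped RealInnerProductSpace

/-- tan of the angle between a unit vector `a` and a vector `b`:
tan θ(a,b) = ‖(I − aaᵀ)b‖ / |⟨a,b⟫|. -/
noncomputable def tanAngle {n : ℕ} (a b : EuclideanSpace ℝ (Fin n)) : ℝ :=
  ‖b - ⟪a, b⟫ • a‖ / |⟪a, b⟫|

lemma algB (l2 D e t : ℝ) (hl : 0 < l2) (hD : 0 < D)
    (ht0 : 0 ≤ t) (ht1 : t < 1) (hB : e * (l2 + D) ≤ l2 * t ^ 2) :
    (l2 * t ^ 2 + D * e * (1 + t ^ 2)) * (l2 + 2 * D) ≤ (l2 + D * e) * t * (l2 + 3 * D) := by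
  have hco : (0:ℝ) ≤ (1 + t^2)*(l2+2*D) - t*(l2+3*D) := by
    nlinarith [mul_nonneg hl.le (sq_nonneg (1-t)), mul_nonneg hD.le (sq_nonneg (1-t)),
      mul_nonneg hl.le ht0, mul_nonneg hD.le ht0]
  have hinner : (0:ℝ) ≤ D*(l2+2*D)*t^2 - D^2*t + (l2+2*D)^2 - D^2 := by
    nlinarith [mul_nonneg (mul_nonneg hD.le (by linarith : (0:ℝ) ≤ l2+2*D)) (sq_nonneg t),
      mul_pos hl hD, sq_nonneg D, mul_le_mul_of_nonneg_left ht1.le (sq_nonneg D)]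
  have h2 : (0:ℝ) ≤ l2 * t * ((1-t) * (D*(l2+2*D)*t^2 - D^2*t + (l2+2*D)^2 - D^2)) :=
    mul_nonneg (mul_nonneg hl.le ht0) (mul_nonneg (by linarith) hinner)
  have h1 := mul_le_mul_of_nonneg_right hB (mul_nonneg hD.le hco)
  nlinarith [h1, h2, mul_pos hl hD, (by linarith : (0:ℝ) < l2 + D)]

lemma algB' (l2 D e a s : ℝ) (hl : 0 < l2) (hD : 0 < D) (he : 0 ≤ e) (hs : 0 ≤ s)
    (ha : 0 < a) (hsa : s < a) (h1 : a^2 + s^2 = 1)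
    (hB : e * (l2 + D) * a^2 ≤ l2 * s^2) :
    (l2*s^2 + D*e) * ((l2+2*D)*a) ≤ (l2+D*e)*s*((l2+3*D)*a^2) := by
  have ht1 : s/a < 1 := (div_lt_one ha).2 hsa
  have ht0 : 0 ≤ s/a := div_nonneg hs ha.le
  have hB' : e * (l2 + D) ≤ l2 * (s/a)^2 := by
    rw [div_pow, ← mul_div_assoc, le_div_iff₀ (by positivity)]
    linarith [hB]
  have key := algB l2 D e (s/a) hl hD ht0 ht1 hB'
  have key2 := mul_le_mul_of_nonneg_right key (by positivity : (0:ℝ) ≤ a^3)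
  have hL : (l2 * (s/a) ^ 2 + D * e * (1 + (s/a) ^ 2)) * (l2 + 2 * D) * a^3
      = (l2*s^2 + D*e) * ((l2+2*D)*a) := by
    field_simp
    linear_combination (D*e) * h1
  have hR : (l2 + D * e) * (s/a) * (l2 + 3 * D) * a^3 = (l2+D*e)*s*((l2+3*D)*a^2) := by
    field_simp
  linarith [hL ▸ hR ▸ key2]

/-- One-step tangent contraction for the noisy tensor power iteration:
for T = ∑_i λ_i v_i^{⊗3} with orthonormal v_i, λ₁ > λ₂ ≥ ⋯ ≥ λ_k > 0,
Δ = (λ₁−λ₂)/4, unit u with tan θ(v₁,u) < 1, and noise ε̃ with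
4‖ε̃‖ ≤ ε(λ₁−λ₂) and 4|⟨v₁,ε̃⟩| ≤ (λ₁−λ₂)cos²θ(v₁,u) for some ε < 1:
tan θ(v₁, T(I,u,u)+ε̃) ≤ max(ε, ((λ₂+Δε)/(λ₂+2Δ)) tan θ(v₁,u)). -/
theorem stmt15 (n k : ℕ) (hk : 2 ≤ k)
    (v : Fin k → EuclideanSpace ℝ (Fin n)) (lam : Fin k → ℝ)
    (horth : ∀ i j, ⟪v i, v j⟫ = if i = j then (1 : ℝ) else 0)
    (hpos : ∀ i, 0 < lam i)
    (hsorted : ∀ i j : Fin k, i ≤ j → lam j ≤ lam i)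
    (hgap : lam ⟨1, by omega⟩ < lam ⟨0, by omega⟩)
    (u noise : EuclideanSpace ℝ (Fin n)) (hu : ‖u‖ = 1)
    (eps : ℝ) (heps : eps < 1)
    (Δ : ℝ) (hΔ : Δ = (lam ⟨0, by omega⟩ - lam ⟨1, by omega⟩) / 4)
    (htan : tanAngle (v ⟨0, by omega⟩) u < 1)
    (hnoise1 : 4 * ‖noise‖ ≤ eps * (lam ⟨0, by omega⟩ - lam ⟨1, by omega⟩))
    (hnoise2 : 4 * |⟪v ⟨0, by omega⟩, noise⟫|
        ≤ (lam ⟨0, by omega⟩ - lam ⟨1, by omega⟩) * ⟪v ⟨0, by omega⟩, u⟫ ^ 2) :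
    tanAngle (v ⟨0, by omega⟩) ((∑ i, (lam i * ⟪v i, u⟫ ^ 2) • v i) + noise)
      ≤ max eps ((lam ⟨1, by omega⟩ + Δ * eps) / (lam ⟨1, by omega⟩ + 2 * Δ)
          * tanAngle (v ⟨0, by omega⟩) u) := by
  have hv : Orthonormal ℝ v := orthonormal_iff_ite.mpr horth
  set i0 : Fin k := ⟨0, by omega⟩ with hi0
  set i1 : Fin k := ⟨1, by omega⟩ with hi1
  set c : ℝ := ⟪v i0, u⟫ with hc
  set d : ℝ := ⟪v i0, noise⟫ with hd
  have hgap' : 0 < lam i0 - lam i1 := by linarith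
  have hΔpos : 0 < Δ := by rw [hΔ]; linarith
  have heps0 : 0 ≤ eps := by nlinarith [norm_nonneg noise]
  have hlam1 : 0 < lam i1 := hpos i1
  have hlam04 : lam i0 = lam i1 + 4 * Δ := by rw [hΔ]; ring
  have hvd : ⟪v i0, (∑ i, (lam i * ⟪v i, u⟫ ^ 2) • v i) + noise⟫ = lam i0 * c ^ 2 + d := by
    rw [inner_add_right, hv.inner_right_fintype]
  have hv1 : ‖v i0‖ = 1 := hv.1 i0
  have hs2 : c ^ 2 + ‖u - c • v i0‖ ^ 2 = 1 := by
    have h := norm_sub_sq_real u (c • v i0)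
    rw [real_inner_smul_right, norm_smul, hu] at h
    rw [real_inner_comm, ← hc, hv1] at h
    simp only [Real.norm_eq_abs, mul_one, one_pow, sq_abs] at h
    rw [h]; ring
  -- noise component
  have hdle : |d| ≤ Δ * c ^ 2 := by rw [hΔ]; nlinarith [hnoise2]
  have hnn : ‖noise - d • v i0‖ ≤ ‖noise‖ := by
    have h := norm_sub_sq_real noise (d • v i0)
    rw [real_inner_smul_right, norm_smul, hv1, mul_one] at h
    have hcomm : ⟪noise, v i0⟫ = d := by rw [hd]; exact real_inner_comm _ _
    rw [hcomm] at h
    simp only [Real.norm_eq_abs] at h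
    nlinarith [norm_nonneg (noise - d • v i0), norm_nonneg noise, h, sq_nonneg d, sq_abs d]
  have hnoiseΔ : ‖noise‖ ≤ Δ * eps := by rw [hΔ]; linarith
  -- split the vector
  have hsplit : (∑ i, (lam i * ⟪v i, u⟫ ^ 2) • v i) + noise - (lam i0 * c ^ 2 + d) • v i0
      = (∑ i ∈ Finset.univ.erase i0, (lam i * ⟪v i, u⟫ ^ 2) • v i) + (noise - d • v i0) := by
    rw [← Finset.add_sum_erase _ _ (Finset.mem_univ i0), ← hc, add_smul]
    abel
  -- Bessel
  have hbess : (∑ i ∈ Finset.univ.erase i0, ⟪v i, u⟫ ^ 2) + c ^ 2 ≤ 1 := by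
    have h := hv.sum_inner_products_le (𝕜 := ℝ) (x := u) (s := Finset.univ)
    rw [hu] at h
    simp only [Real.norm_eq_abs, sq_abs, one_pow] at h
    have h2 := Finset.sum_erase_add Finset.univ (fun i => (⟪v i, u⟫ : ℝ) ^ 2) (Finset.mem_univ i0)
    rw [hc]
    linarith [h, h2]
  have hBnonneg : 0 ≤ ∑ i ∈ Finset.univ.erase i0, ⟪v i, u⟫ ^ 2 :=
    Finset.sum_nonneg fun i _ => sq_nonneg _
  -- norm of the tail sum
  have hA2 : ‖∑ i ∈ Finset.univ.erase i0, (lam i * ⟪v i, u⟫ ^ 2) • v i‖ ^ 2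
      = ∑ i ∈ Finset.univ.erase i0, (lam i * ⟪v i, u⟫ ^ 2) ^ 2 := by
    rw [← real_inner_self_eq_norm_sq, hv.inner_sum]
    simp [sq]
  have hA2le : ∑ i ∈ Finset.univ.erase i0, (lam i * ⟪v i, u⟫ ^ 2) ^ 2
      ≤ (lam i1 * ∑ i ∈ Finset.univ.erase i0, ⟪v i, u⟫ ^ 2) ^ 2 := by
    have step : ∀ i ∈ Finset.univ.erase i0, (lam i * ⟪v i, u⟫ ^ 2) ^ 2
        ≤ lam i1 ^ 2 * (⟪v i, u⟫ ^ 2 * ∑ j ∈ Finset.univ.erase i0, ⟪v j, u⟫ ^ 2) := by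
      intro i hi
      have hine : i ≠ i0 := Finset.ne_of_mem_erase hi
      have h1i : i1 ≤ i := by
        rw [hi1]
        have hv0 : i.val ≠ 0 := fun h => hine (by rw [hi0]; exact Fin.ext (by simp [h]))
        exact Fin.mk_le_of_le_val (by omega)
      have hli : lam i ≤ lam i1 := hsorted i1 i h1i
      have hcB : ⟪v i, u⟫ ^ 2 ≤ ∑ j ∈ Finset.univ.erase i0, ⟪v j, u⟫ ^ 2 :=
        Finset.single_le_sum (fun j _ => sq_nonneg (⟪v j, u⟫ : ℝ)) hi
      have h4 : lam i ^ 2 ≤ lam i1 ^ 2 := by nlinarith [(hpos i).le]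
      have h5 := mul_le_mul_of_nonneg_right h4 (sq_nonneg ((⟪v i, u⟫ : ℝ) ^ 2))
      have h6 := mul_le_mul_of_nonneg_left hcB
        (mul_nonneg (sq_nonneg (lam i1)) (sq_nonneg (⟪v i, u⟫ : ℝ)))
      nlinarith [h5, h6]
    calc ∑ i ∈ Finset.univ.erase i0, (lam i * ⟪v i, u⟫ ^ 2) ^ 2
        ≤ ∑ i ∈ Finset.univ.erase i0,
            lam i1 ^ 2 * (⟪v i, u⟫ ^ 2 * ∑ j ∈ Finset.univ.erase i0, ⟪v j, u⟫ ^ 2) :=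
          Finset.sum_le_sum step
      _ = (lam i1 * ∑ i ∈ Finset.univ.erase i0, ⟪v i, u⟫ ^ 2) ^ 2 := by
          rw [← Finset.mul_sum, ← Finset.sum_mul]; ring
  have hAle : ‖∑ i ∈ Finset.univ.erase i0, (lam i * ⟪v i, u⟫ ^ 2) • v i‖
      ≤ lam i1 * ‖u - c • v i0‖ ^ 2 := by
    have hBs : (∑ i ∈ Finset.univ.erase i0, ⟪v i, u⟫ ^ 2) ≤ ‖u - c • v i0‖ ^ 2 := by
      linarith [hbess, hs2]
    have h1 : ‖∑ i ∈ Finset.univ.erase i0, (lam i * ⟪v i, u⟫ ^ 2) • v i‖ ^ 2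
        ≤ (lam i1 * ‖u - c • v i0‖ ^ 2) ^ 2 := by
      rw [hA2]
      nlinarith [hA2le, hBs, hBnonneg, hlam1.le,
        mul_le_mul_of_nonneg_left (mul_self_le_mul_self hBnonneg hBs) (sq_nonneg (lam i1))]
    nlinarith [norm_nonneg (∑ i ∈ Finset.univ.erase i0, (lam i * ⟪v i, u⟫ ^ 2) • v i),
      mul_nonneg hlam1.le (sq_nonneg ‖u - c • v i0‖), h1]
  -- numerator bound
  have hNum : ‖(∑ i, (lam i * ⟪v i, u⟫ ^ 2) • v i) + noise - (lam i0 * c ^ 2 + d) • v i0‖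
      ≤ lam i1 * ‖u - c • v i0‖ ^ 2 + Δ * eps := by
    rw [hsplit]
    calc ‖(∑ i ∈ Finset.univ.erase i0, (lam i * ⟪v i, u⟫ ^ 2) • v i) + (noise - d • v i0)‖
        ≤ ‖∑ i ∈ Finset.univ.erase i0, (lam i * ⟪v i, u⟫ ^ 2) • v i‖ + ‖noise - d • v i0‖ :=
          norm_add_le _ _
      _ ≤ lam i1 * ‖u - c • v i0‖ ^ 2 + Δ * eps := by
          have := le_trans hnn hnoiseΔ
          linarith [hAle]
  set s : ℝ := ‖u - c • v i0‖ with hs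
  have hs0 : 0 ≤ s := norm_nonneg _
  have htan' : s / |c| < 1 := by
    have h := htan
    rw [tanAngle, ← hc, ← hs] at h
    exact h
  rw [tanAngle, hvd]
  by_cases hc0 : c = 0
  · have hd0 : d = 0 := by
      have h := hdle
      rw [hc0] at h
      simp only [ne_eq, OfNat.ofNat_ne_zero, not_false_eq_true, zero_pow, mul_zero] at h
      exact abs_eq_zero.mp (le_antisymm h (abs_nonneg d))
    rw [hc0, hd0]
    simp only [ne_eq, OfNat.ofNat_ne_zero, not_false_eq_true, zero_pow, mul_zero, add_zero,
      abs_zero, div_zero]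
    exact le_trans heps0 (le_max_left _ _)
  · have hapos : 0 < |c| := abs_pos.mpr hc0
    have hcpos : 0 < c ^ 2 := by rw [← sq_abs]; positivity
    have hsa : s < |c| := (div_lt_one hapos).mp htan'
    have hsc : s ^ 2 < c ^ 2 := by nlinarith [sq_abs c]
    have hchalf : 1 ≤ 2 * c ^ 2 := by nlinarith [hs2]
    have hDen : (lam i1 + 3 * Δ) * c ^ 2 ≤ lam i0 * c ^ 2 + d := by
      have h := (abs_le.mp hdle).1
      have h2 : lam i0 * c ^ 2 = lam i1 * c ^ 2 + 4 * (Δ * c ^ 2) := by rw [hlam04]; ring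
      nlinarith [h, h2]
    have hb1 : 0 < (lam i1 + 3 * Δ) * c ^ 2 := mul_pos (by linarith) hcpos
    have hDenpos : 0 < lam i0 * c ^ 2 + d := lt_of_lt_of_le hb1 hDen
    rw [abs_of_pos hDenpos]
    have hstep1 : ‖(∑ i, (lam i * ⟪v i, u⟫ ^ 2) • v i) + noise - (lam i0 * c ^ 2 + d) • v i0‖
          / (lam i0 * c ^ 2 + d)
        ≤ (lam i1 * s ^ 2 + Δ * eps) / ((lam i1 + 3 * Δ) * c ^ 2) :=
      div_le_div₀ (by positivity) hNum hb1 hDen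
    refine le_trans hstep1 ?_
    have htanu : tanAngle (v i0) u = s / |c| := by rw [tanAngle, ← hc, ← hs]
    clear_value s c d
    rcases le_total (lam i1 * s ^ 2) (eps * ((lam i1 + Δ) * c ^ 2)) with hcase | hcase
    · refine le_trans ?_ (le_max_left _ _)
      rw [div_le_iff₀ hb1]
      nlinarith [mul_nonneg (mul_nonneg hΔpos.le heps0) (by linarith : (0:ℝ) ≤ 2 * c ^ 2 - 1),
        hcase]
    · refine le_trans ?_ (le_max_right _ _)
      have hb2 : 0 < (lam i1 + 2 * Δ) * |c| := mul_pos (by linarith) hapos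
      rw [htanu, div_mul_div_comm, div_le_div_iff₀ hb1 hb2]
      have key := algB' (lam i1) Δ eps |c| s hlam1 hΔpos heps0 hs0 hapos hsa
        (by rw [sq_abs]; linarith [hs2])
        (by rw [sq_abs]; linarith [hcase])
      rw [sq_abs] at key
      linarith [key]
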